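/- Assume s is special for S with parameter α and that more than ε·|S|/2 vertices of S are blue. Then the probability that a μ-random walk is heavy is at least ε·α·|S|/(8·(ℓ+1)). -/

import Mathlib

open MeasureTheory SimpleGraph

namespace CF

variable {V : Type} [Fintype V] [DecidableEq V]

/-- The subgraph of `G` induced on the vertex set `S` (kept as a graph on `V`). -/
def inducedSub (G : SimpleGraph V) (S : Set V) : SimpleGraph V where
  Adj u v := u ∈ S ∧ v ∈ S ∧ G.Adj u v
  symm := ⟨fun u v h => ⟨h.2.1, h.1, h.2.2.symm⟩⟩
  loopless := ⟨fun v h => G.irrefl h.2.2⟩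

/-- The space of walks in `G` starting at `s` of length at most `ℓ`
(a lazy walk of length `ℓ` induces such a walk after deleting self-loops). -/
def WalkSpace (G : SimpleGraph V) (s : V) (ℓ : ℕ) : Type :=
  Σ t : V, {w : G.Walk s t // w.length ≤ ℓ}

instance (G : SimpleGraph V) (s : V) (ℓ : ℕ) : MeasurableSpace (WalkSpace G s ℓ) := ⊤

variable {G : SimpleGraph V} {s : V} {ℓ : ℕ}

/-- The walk `W` reaches the vertex `v`. -/
def Reaches (W : WalkSpace G s ℓ) (v : V) : Prop := v ∈ W.2.1.support

/-- The simple path from `s` to `v` induced by a walk `W` reaching `v`: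
truncate `W` at its first visit to `v` and delete retraced segments. -/
def inducedPath (W : WalkSpace G s ℓ) (v : V) (h : Reaches W v) : G.Walk s v :=
  (W.2.1.takeUntil v h).bypass

/-- `s` is special for `S` with parameter `α`: every vertex of `S` is reached
by a `μ`-random walk with probability at least `α`. -/
def Special (μ : Measure (WalkSpace G s ℓ)) (S : Finset V) (α : ℝ) : Prop :=
  ∀ v ∈ S, α ≤ (μ {W | Reaches W v}).toReal

/-- `P` is a dominant path to `v`: `P` is a simple path from `s` to `v`, more than half of
the probability mass of walks reaching `v` induce `P` at `v`, and the probability of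
reaching `v` inducing a path different from `P` is less than `α/2`. -/
def IsDominantPath (μ : Measure (WalkSpace G s ℓ)) (α : ℝ) (v : V) (P : G.Walk s v) : Prop :=
  P.IsPath ∧
    (μ {W | Reaches W v}).toReal / 2 <
      (μ {W | ∃ h : Reaches W v, inducedPath W v h = P}).toReal ∧
    (μ {W | ∃ h : Reaches W v, inducedPath W v h ≠ P}).toReal < α / 2

/-- `v` is isolated: it has a dominant path. -/
def Isolated (μ : Measure (WalkSpace G s ℓ)) (α : ℝ) (v : V) : Prop :=
  ∃ P : G.Walk s v, IsDominantPath μ α v P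

/-- The directed edge `⟨u,v⟩` of `G_S` is dominant. -/
def Dominant (μ : Measure (WalkSpace G s ℓ)) (S : Finset V) (α : ℝ) (u v : V) : Prop :=
  u ∈ S ∧ v ∈ S ∧ G.Adj u v ∧ Isolated μ α v ∧
    (μ {W | ∃ h : Reaches W v, s(u, v) ∉ (inducedPath W v h).edges}).toReal < α / 2

/-- The undirected edge `(u,v)` of `G_S` is recessive. -/
def Recessive (μ : Measure (WalkSpace G s ℓ)) (S : Finset V) (α : ℝ) (u v : V) : Prop :=
  u ∈ S ∧ v ∈ S ∧ G.Adj u v ∧ ¬ Dominant μ S α u v ∧ ¬ Dominant μ S α v u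

/-- Two walks form a cycle if the subgraph of `G` induced on the union of their
vertex sets contains a cycle. -/
def FormsCycle (W W' : WalkSpace G s ℓ) : Prop :=
  ¬ (inducedSub G ({v | Reaches W v} ∪ {v | Reaches W' v})).IsAcyclic

/-- `cyc_W`: the probability that an independent `μ`-random walk forms a cycle with `W`. -/
noncomputable def cycProb (μ : Measure (WalkSpace G s ℓ)) (W : WalkSpace G s ℓ) : ℝ :=
  (μ {W' | FormsCycle W W'}).toReal

/-- `W` is heavy if `cyc_W > 1/√n`. -/
def Heavy (μ : Measure (WalkSpace G s ℓ)) (W : WalkSpace G s ℓ) : Prop :=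
  1 / Real.sqrt (Fintype.card V) < cycProb μ W

/-- `W` is light if it is not heavy. -/
def Light (μ : Measure (WalkSpace G s ℓ)) (W : WalkSpace G s ℓ) : Prop := ¬ Heavy μ W

/-- `q^H_v`: the probability that a `μ`-random walk is heavy and reaches `v`. -/
noncomputable def qH (μ : Measure (WalkSpace G s ℓ)) (v : V) : ℝ :=
  (μ {W | Heavy μ W ∧ Reaches W v}).toReal

/-- `v` is blue if `q^H_v > α/4`. -/
def Blue (μ : Measure (WalkSpace G s ℓ)) (α : ℝ) (v : V) : Prop := α / 4 < qH μ v

/-- The event `E_w` on a pair of independent walks: both walks are light and either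
(i) both reach `w` and induce distinct paths at `w`, or (ii) one reaches `w`, the other
reaches a `G_S`-neighbor `u` of `w`, and the edge sets of the two induced paths together
with the edge `(u,w)` contain a cycle. -/
def EventE (μ : Measure (WalkSpace G s ℓ)) (S : Finset V) (w : V)
    (p : WalkSpace G s ℓ × WalkSpace G s ℓ) : Prop :=
  Light μ p.1 ∧ Light μ p.2 ∧
    ((∃ (h1 : Reaches p.1 w) (h2 : Reaches p.2 w),
        inducedPath p.1 w h1 ≠ inducedPath p.2 w h2) ∨
      (∃ u, u ∈ S ∧ w ∈ S ∧ G.Adj u w ∧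
        ((∃ (h1 : Reaches p.1 w) (h2 : Reaches p.2 u),
            ¬ (SimpleGraph.fromEdgeSet
                ({e | e ∈ (inducedPath p.1 w h1).edges} ∪
                  {e | e ∈ (inducedPath p.2 u h2).edges} ∪ {s(u, w)})).IsAcyclic) ∨
          (∃ (h1 : Reaches p.2 w) (h2 : Reaches p.1 u),
            ¬ (SimpleGraph.fromEdgeSet
                ({e | e ∈ (inducedPath p.2 w h1).edges} ∪
                  {e | e ∈ (inducedPath p.1 u h2).edges} ∪ {s(u, w)})).IsAcyclic))))

end CF

open MeasureTheory

theorem key_sum_le {V : Type} [Fintype V] [DecidableEq V] (G : SimpleGraph V) (s : V) (ℓ : ℕ)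
    (μ : Measure (CF.WalkSpace G s ℓ)) [IsProbabilityMeasure μ]
    (B : Finset V) :
    ∑ v ∈ B, μ {W | CF.Heavy μ W ∧ CF.Reaches W v} ≤
      ((ℓ : ENNReal) + 1) * μ {W | CF.Heavy μ W} := by
  classical
  have hm : ∀ t : Set (CF.WalkSpace G s ℓ), MeasurableSet t := fun t =>
    MeasurableSpace.measurableSet_top
  calc ∑ v ∈ B, μ {W | CF.Heavy μ W ∧ CF.Reaches W v}
      = ∑ v ∈ B, ∫⁻ W, ({W | CF.Heavy μ W ∧ CF.Reaches W v}).indicator 1 W ∂μ := by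
        simp_rw [lintegral_indicator_one (hm _)]
    _ = ∫⁻ W, ∑ v ∈ B, ({W | CF.Heavy μ W ∧ CF.Reaches W v}).indicator 1 W ∂μ := by
        rw [lintegral_finset_sum]
        intro b _
        exact Measurable.of_discrete
    _ ≤ ∫⁻ W, ({W | CF.Heavy μ W}).indicator (fun _ => (ℓ : ENNReal) + 1) W ∂μ := by
        apply lintegral_mono
        intro W
        dsimp only
        by_cases hH : CF.Heavy μ W
        · rw [Set.indicator_of_mem (show W ∈ {W | CF.Heavy μ W} from hH)]
          calc ∑ v ∈ B, ({W | CF.Heavy μ W ∧ CF.Reaches W v}).indicator 1 W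
              ≤ ∑ v ∈ B.filter (fun v => CF.Reaches W v), (1 : ENNReal) := by
                rw [Finset.sum_filter]
                apply Finset.sum_le_sum
                intro v _
                by_cases hr : CF.Reaches W v
                · rw [if_pos hr]
                  exact Set.indicator_le_self {W | CF.Heavy μ W ∧ CF.Reaches W v} (fun _ => (1:ENNReal)) W
                · simp [Set.indicator_apply, hr]
            _ = ((B.filter (fun v => CF.Reaches W v)).card : ENNReal) := by simp
            _ ≤ ((ℓ : ENNReal) + 1) := by
                have h1 : (B.filter (fun v => CF.Reaches W v)) ⊆ W.2.1.support.toFinset := by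
                  intro v hv
                  simp only [Finset.mem_filter] at hv
                  simpa [List.mem_toFinset, CF.Reaches] using hv.2
                have h2 : (B.filter (fun v => CF.Reaches W v)).card ≤ ℓ + 1 := by
                  calc (B.filter (fun v => CF.Reaches W v)).card
                      ≤ W.2.1.support.toFinset.card := Finset.card_le_card h1
                    _ ≤ W.2.1.support.length := List.toFinset_card_le _
                    _ = W.2.1.length + 1 := SimpleGraph.Walk.length_support _
                    _ ≤ ℓ + 1 := by have := W.2.2; omega
                calc ((B.filter (fun v => CF.Reaches W v)).card : ENNReal)
                    ≤ ((ℓ + 1 : ℕ) : ENNReal) := by exact_mod_cast h2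
                  _ = (ℓ : ENNReal) + 1 := by push_cast; ring
        · have : ∀ v ∈ B, ({W | CF.Heavy μ W ∧ CF.Reaches W v}).indicator (fun _ => (1:ENNReal)) W = 0 := by
            intro v _
            apply Set.indicator_of_notMem
            simp [hH]
          exact le_trans (le_of_eq (Finset.sum_eq_zero this)) zero_le
    _ = ((ℓ : ENNReal) + 1) * μ {W | CF.Heavy μ W} := by
        rw [lintegral_indicator_const (hm _)]


/-- If more than `ε·|S|/2` vertices of `S` are blue, then the probability that
a `μ`-random walk is heavy is at least `ε·α·|S|/(8(ℓ+1))`. -/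
theorem stmt5 {V : Type} [Fintype V] [DecidableEq V]
    (G : SimpleGraph V) [DecidableRel G.Adj] (d : ℕ) (hd : 1 ≤ d)
    (hdeg : ∀ v, G.degree v ≤ d)
    (ε : ℝ) (hε0 : 0 < ε) (hε1 : ε < 1)
    (S : Finset V) (s : V) (hs : s ∈ S) (ℓ : ℕ)
    (μ : MeasureTheory.Measure (CF.WalkSpace G s ℓ)) [MeasureTheory.IsProbabilityMeasure μ]
    (α : ℝ) (hα : 0 < α) (hspec : CF.Special μ S α)
    (hblue : ε * S.card / 2 < ({v | v ∈ S ∧ CF.Blue μ α v}.ncard : ℝ)) :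
    ε * α * S.card / (8 * (ℓ + 1)) ≤ (μ {W | CF.Heavy μ W}).toReal := by
  classical
  set B : Finset V := S.filter (fun v => CF.Blue μ α v) with hB
  have hset : {v | v ∈ S ∧ CF.Blue μ α v} = ↑B := by
    ext v; simp [hB]
  rw [hset, Set.ncard_coe_finset] at hblue
  have key := key_sum_le G s ℓ μ B
  set H : ℝ := (μ {W | CF.Heavy μ W}).toReal with hHdef
  have hHnn : 0 ≤ H := ENNReal.toReal_nonneg
  have keyR : ∑ v ∈ B, (μ {W | CF.Heavy μ W ∧ CF.Reaches W v}).toReal ≤ ((ℓ : ℝ) + 1) * H := by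
    have hne : ((ℓ : ENNReal) + 1) * μ {W | CF.Heavy μ W} ≠ ⊤ :=
      ENNReal.mul_ne_top (by simp) (MeasureTheory.measure_ne_top μ _)
    have := ENNReal.toReal_mono hne key
    rw [ENNReal.toReal_sum (fun v _ => MeasureTheory.measure_ne_top μ _),
      ENNReal.toReal_mul] at this
    simpa [ENNReal.toReal_add] using this
  have hlow : (B.card : ℝ) * (α / 4) ≤
      ∑ v ∈ B, (μ {W | CF.Heavy μ W ∧ CF.Reaches W v}).toReal := by
    have := Finset.card_nsmul_le_sum B
      (fun v => (μ {W | CF.Heavy μ W ∧ CF.Reaches W v}).toReal) (α / 4) ?_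
    · simpa [nsmul_eq_mul] using this
    · intro v hv
      have hblue' : CF.Blue μ α v := (Finset.mem_filter.mp hv).2
      exact le_of_lt hblue'
  have h2 : (B.card : ℝ) * (α / 4) ≤ ((ℓ : ℝ) + 1) * H := le_trans hlow keyR
  have hℓpos : (0 : ℝ) < 8 * ((ℓ : ℝ) + 1) := by positivity
  rw [div_le_iff₀ hℓpos]
  have hScard : (0 : ℝ) ≤ (S.card : ℝ) := Nat.cast_nonneg _
  nlinarith [hblue, h2, hα, hScard]
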